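/- Let 𝒟 be a set of tournaments on X and d a tournament on X. Then d ∈ maj-cl(𝒟) if and only if there exist a nonempty finite index set J and a family (c_j)_{j∈J} of members of 𝒟 such that for all distinct x, y ∈ X: d x y holds if and only if |{j ∈ J : c_j x y}| > |J|/2. -/

import Mathlib

section StmtTwoAux

open Classical in
private lemma finsum_mem_setOf_aux {τ : Type*} [Fintype τ] (Q : τ → Prop) [DecidablePred Q]
    (f : τ → ℝ) :
    (∑ᶠ i ∈ {i | Q i}, f i) = ∑ i ∈ Finset.univ.filter (fun i => Q i), f i := by
  rw [← finsum_mem_coe_finset]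
  congr 1
  ext i; simp

end StmtTwoAux


open scoped BigOperators

variable {X : Type*}

/-- A tournament on `X`: irreflexive and, on distinct points, exactly one direction holds. -/
def IsTournament (R : X → X → Prop) : Prop :=
  (∀ x, ¬ R x x) ∧ ∀ x y : X, x ≠ y → (R x y ↔ ¬ R y x)

/-- Out-degree of `x` in the relation `R`. -/
noncomputable def valT (R : X → X → Prop) (x : X) : ℕ :=
  Set.ncard {y | R x y}

/-- A tournament is balanced if every out-degree equals `(n-1)/2`. -/
def IsBalanced [Fintype X] (R : X → X → Prop) : Prop :=
  ∀ x : X, (valT R x : ℝ) = ((Fintype.card X : ℝ) - 1) / 2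

/-- Action of a permutation on a relation. -/
def permAct (π : Equiv.Perm X) (R : X → X → Prop) : X → X → Prop :=
  fun x y => R (π.symm x) (π.symm y)

/-- A set of relations closed under the permutation action. -/
def SymmetricSet (D : Set (X → X → Prop)) : Prop :=
  ∀ (π : Equiv.Perm X), ∀ R ∈ D, permAct π R ∈ D

/-- The majority closure of a set of tournaments. -/
def majCl [Fintype X] (D : Set (X → X → Prop)) : Set (X → X → Prop) :=
  {d | IsTournament d ∧ ∃ w : (X → X → Prop) → ℝ,
    (∀ c, 0 ≤ w c ∧ w c ≤ 1) ∧
    (∀ c, w c ≠ 0 → c ∈ D) ∧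
    (Function.support w).Finite ∧
    (∑ᶠ c, w c) = 1 ∧
    ∀ x y : X, x ≠ y →
      (d x y ↔ 1 / 2 < ∑ᶠ c ∈ {c : X → X → Prop | c ∈ D ∧ c x y}, w c)}

open Classical in
noncomputable def tOf (d : X → X → Prop) : X → X → ℝ :=
  fun x y => if d x y then 1 else 0

/-- pr-cl: the convex hull of `{t[d] : d ∈ D}`. -/
noncomputable def prCl (D : Set (X → X → Prop)) : Set (X → X → ℝ) :=
  convexHull ℝ (tOf '' D)

/-- `t` is a weighted tournament. -/
def IsWeighted (t : X → X → ℝ) : Prop :=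
  ∀ x y : X, x ≠ y → 0 ≤ t x y ∧ t x y ≤ 1 ∧ t y x = 1 - t x y

/-- A weighted tournament is balanced if each row sums to `(n-1)/2`. -/
def BalancedW [Fintype X] (t : X → X → ℝ) : Prop :=
  ∀ x : X, (∑ᶠ y ∈ {y : X | y ≠ x}, t x y) = ((Fintype.card X : ℝ) - 1) / 2

/-- A tournament is pseudo-balanced if it is dominated by a balanced weighted tournament. -/
def PseudoBalanced [Fintype X] (c : X → X → Prop) : Prop :=
  ∃ t : X → X → ℝ, IsWeighted t ∧ BalancedW t ∧
    ∀ x y : X, x ≠ y → c x y → 1 / 2 < t x y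

open Classical in
noncomputable def tConfig (x y : X) (a s0 s1 : ℝ) : X → X → ℝ :=
  fun u v =>
    if u = v then 0
    else if u = x ∧ v = y then a
    else if u = y ∧ v = x then 1 - a
    else if u = x then s0
    else if v = x then 1 - s0
    else if u = y then s1
    else if v = y then 1 - s1
    else 1 / 2

/-- `Prd_ℓ(𝒟)`. -/
noncomputable def PrdL [Fintype X] (l : ℕ) (D : Set (X → X → Prop)) : Set (ℝ × ℝ) :=
  {p | ∃ c ∈ D, ∃ x y : X, x ≠ y ∧ (c x y ↔ l = 1) ∧
    p.1 = (Set.ncard {z : X | z ≠ x ∧ z ≠ y ∧ c x z} : ℝ) / ((Fintype.card X : ℝ) - 2) ∧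
    p.2 = (Set.ncard {z : X | z ≠ x ∧ z ≠ y ∧ c y z} : ℝ) / ((Fintype.card X : ℝ) - 2)}

/-- `Pr_A(𝒟)`. -/
noncomputable def PrA [Fintype X] (A : Set ℝ) (D : Set (X → X → Prop)) : Set (ℝ × ℝ) :=
  {p | 0 ≤ p.1 ∧ p.1 ≤ 1 ∧ 0 ≤ p.2 ∧ p.2 ≤ 1 ∧
    ∃ x y : X, x ≠ y ∧ ∃ a ∈ A, tConfig x y a p.1 p.2 ∈ prCl D}

/-- `V_ℓ(d)` as a subset of `ℝ²`. -/
noncomputable def Vset [Fintype X] (l : ℕ) (d : X → X → Prop) : Set (ℝ × ℝ) :=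
  {p | ∃ x y : X, x ≠ y ∧ (if l = 1 then d x y else d y x) ∧
    p = ((valT d x : ℝ), (valT d y : ℝ))}

/-- `V*_ℓ(d)`. -/
noncomputable def VstarSet [Fintype X] (l : ℕ) (d : X → X → Prop) : Set (ℝ × ℝ) :=
  {p | ∃ q ∈ Vset l d, p = (q.1 - (l : ℝ), q.2 - (1 - (l : ℝ)))}

open Classical in
noncomputable def tCycle (k : ℕ) (xs : ℕ → X) (a : ℝ) : X → X → ℝ :=
  fun u v =>
    if u = v then 0
    else if ∃ i < k, u = xs i ∧ v = xs ((i + 1) % k) then a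
    else if ∃ i < k, v = xs i ∧ u = xs ((i + 1) % k) then 1 - a
    else 1 / 2

open Classical in
noncomputable def tTriple (x y z : X) : X → X → ℝ :=
  fun u v =>
    if u = v then 0
    else if (u, v) = (x, y) ∨ (u, v) = (y, z) ∨ (u, v) = (z, x) then 1
    else if (u, v) = (y, x) ∨ (u, v) = (z, y) ∨ (u, v) = (x, z) then 0
    else 1 / 2

/-- The dual (reverse) tournament. -/
def dualT (c : X → X → Prop) : X → X → Prop := fun x y => c y x

/-- The symmetric closure (orbit) of a single tournament. -/
def symCl (c : X → X → Prop) : Set (X → X → Prop) :=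
  {d | ∃ π : Equiv.Perm X, d = permAct π c}

theorem stmt2 [Fintype X] (hcard : 3 ≤ Fintype.card X)
    (D : Set (X → X → Prop)) (hT : ∀ c ∈ D, IsTournament c)
    (d : X → X → Prop) (hd : IsTournament d) :
    d ∈ majCl D ↔
      ∃ m : ℕ, 0 < m ∧ ∃ cs : Fin m → (X → X → Prop),
        (∀ j, cs j ∈ D) ∧
        ∀ x y : X, x ≠ y →
          (d x y ↔ (m : ℝ) / 2 < (Set.ncard {j : Fin m | cs j x y} : ℝ)) := by
  classical
  haveI : Fintype (X → X → Prop) := Fintype.ofFinite _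
  constructor
  · rintro ⟨-, w, hw01, hwD, -, hwsum, hmaj⟩
    set S : X → X → ℝ := fun x y =>
      ∑ c ∈ Finset.univ.filter (fun c => c ∈ D ∧ c x y), w c with hSdef
    have hmaj' : ∀ x y : X, x ≠ y → (d x y ↔ 1 / 2 < S x y) := by
      intro x y hxy
      rw [hmaj x y hxy, finsum_mem_setOf_aux]
    have hsum1 : ∑ c : X → X → Prop, w c = 1 := by
      rw [← finsum_eq_sum_of_fintype]; exact hwsum
    have hsumD : ∑ c ∈ Finset.univ.filter (fun c => c ∈ D), w c = 1 := by
      rw [← hsum1]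
      symm
      rw [← Finset.sum_filter_add_sum_filter_not Finset.univ (fun c => c ∈ D) w]
      have hz : ∑ c ∈ Finset.univ.filter (fun c => ¬ c ∈ D), w c = 0 := by
        apply Finset.sum_eq_zero
        intro c hc
        simp only [Finset.mem_filter] at hc
        by_contra h
        exact hc.2 (hwD c h)
      rw [hz, add_zero]
    have hcompl : ∀ x y : X, x ≠ y → S x y + S y x = 1 := by
      intro x y hxy
      have h2 := Finset.sum_filter_add_sum_filter_not
        (Finset.univ.filter (fun c => c ∈ D)) (fun c => c x y) w
      rw [Finset.filter_filter, Finset.filter_filter] at h2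
      have h3 : Finset.univ.filter (fun c => c ∈ D ∧ ¬ c x y)
          = Finset.univ.filter (fun c => c ∈ D ∧ c y x) := by
        apply Finset.filter_congr
        intro c _
        constructor
        · rintro ⟨hcD, hnxy⟩
          exact ⟨hcD, ((hT c hcD).2 y x hxy.symm).2 hnxy⟩
        · rintro ⟨hcD, hyx⟩
          exact ⟨hcD, ((hT c hcD).2 y x hxy.symm).1 hyx⟩
      rw [h3, hsumD] at h2
      exact h2
    have hSlt : ∀ x y : X, x ≠ y → ¬ d x y → S x y < 1 / 2 := by
      intro x y hxy hnd
      have hdyx : d y x := ((hd.2 y x hxy.symm)).2 (by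
        intro h; exact hnd h)
      have := (hmaj' y x hxy.symm).1 hdyx
      have := hcompl x y hxy
      linarith
    -- two distinct points
    obtain ⟨x0, y0, hx0y0⟩ : ∃ a b : X, a ≠ b :=
      Fintype.exists_pair_of_one_lt_card (by omega)
    set P : Finset (X × X) := Finset.univ.filter (fun p => p.1 ≠ p.2) with hPdef
    have hPne : P.Nonempty := ⟨(x0, y0), by simp [hPdef, hx0y0]⟩
    set ε : ℝ := P.inf' hPne (fun p => |S p.1 p.2 - 1 / 2|) with hεdef
    have hεle : ∀ x y : X, x ≠ y → ε ≤ |S x y - 1 / 2| := by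
      intro x y hxy
      have hmem : ((x, y) : X × X) ∈ P := by simp [hPdef, hxy]
      exact Finset.inf'_le _ hmem
    have hεpos : 0 < ε := by
      rw [hεdef, Finset.lt_inf'_iff]
      rintro ⟨x, y⟩ hp
      simp only [hPdef, Finset.mem_filter] at hp
      have hxy : x ≠ y := hp.2
      rw [abs_pos, sub_ne_zero]
      by_cases hdxy : d x y
      · exact ne_of_gt ((hmaj' x y hxy).1 hdxy)
      · exact ne_of_lt (hSlt x y hxy hdxy)
    set K : ℕ := Fintype.card (X → X → Prop) with hKdef
    have hKpos : 0 < K := Fintype.card_pos_iff.2 ⟨d⟩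
    set N : ℕ := K + 1 + ⌈(K : ℝ) / ε⌉₊ with hNdef
    have hNK : (K : ℝ) < N := by
      have h : K < N := by rw [hNdef]; omega
      exact_mod_cast h
    have hNε : (K : ℝ) ≤ N * ε := by
      have h1 : (K : ℝ) / ε ≤ (⌈(K : ℝ) / ε⌉₊ : ℝ) := Nat.le_ceil _
      have h2 : ((⌈(K : ℝ) / ε⌉₊ : ℕ) : ℝ) ≤ N := by
        exact_mod_cast Nat.le_add_left _ _
      have h3 : (K : ℝ) / ε ≤ N := le_trans h1 h2
      calc (K : ℝ) = (K / ε) * ε := by field_simp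
        _ ≤ N * ε := mul_le_mul_of_nonneg_right h3 hεpos.le
    set k : (X → X → Prop) → ℕ := fun c => ⌊(N : ℝ) * w c⌋₊ with hkdef
    have hkle : ∀ c, (k c : ℝ) ≤ N * w c := fun c =>
      Nat.floor_le (mul_nonneg (Nat.cast_nonneg _) (hw01 c).1)
    have hkgt : ∀ c, (N : ℝ) * w c - 1 < k c := fun c => Nat.sub_one_lt_floor _
    set m : ℕ := ∑ c : X → X → Prop, k c with hmdef
    have hmleN : (m : ℝ) ≤ N := by
      rw [hmdef]
      push_cast
      calc ∑ c : X → X → Prop, (k c : ℝ) ≤ ∑ c : X → X → Prop, (N : ℝ) * w c :=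
            Finset.sum_le_sum (fun c _ => hkle c)
        _ = N * ∑ c : X → X → Prop, w c := by rw [Finset.mul_sum]
        _ = N := by rw [hsum1, mul_one]
    have hmgt : (N : ℝ) - K < m := by
      rw [hmdef]
      push_cast
      have h1 : ∑ c : X → X → Prop, ((N : ℝ) * w c - 1) < ∑ c : X → X → Prop, (k c : ℝ) :=
        Finset.sum_lt_sum_of_nonempty (Finset.univ_nonempty) (fun c _ => hkgt c)
      have h2 : ∑ c : X → X → Prop, ((N : ℝ) * w c - 1) = N - K := by
        rw [Finset.sum_sub_distrib, ← Finset.mul_sum, hsum1, mul_one]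
        simp [hKdef, Finset.card_univ]
      linarith
    have hmpos : 0 < m := by
      have : (0 : ℝ) < m := by linarith
      exact_mod_cast this
    have hcardeq : Fintype.card ((c : X → X → Prop) × Fin (k c)) = m := by
      rw [Fintype.card_sigma, hmdef]
      simp only [Fintype.card_fin]
    set e : ((c : X → X → Prop) × Fin (k c)) ≃ Fin m := Fintype.equivFinOfCardEq hcardeq with hedef
    set cs : Fin m → (X → X → Prop) := fun j => (e.symm j).1 with hcsdef
    have hkD : ∀ c, k c ≠ 0 → c ∈ D := by
      intro c hkc
      apply hwD
      intro h0
      apply hkc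
      simp [hkdef, h0]
    have hcsD : ∀ j, cs j ∈ D := by
      intro j
      apply hkD
      simp only [hcsdef]
      have h := (e.symm j).2.pos
      omega
    refine ⟨m, hmpos, cs, hcsD, ?_⟩
    intro x y hxy
    -- the count
    have hcount : (Set.ncard {j : Fin m | cs j x y} : ℕ)
        = ∑ c ∈ Finset.univ.filter (fun c => c x y), k c := by
      rw [Set.ncard_eq_toFinset_card', Set.toFinset_setOf]
      have hbij : (Finset.univ.filter (fun s : (c : X → X → Prop) × Fin (k c) => s.1 x y)).card
          = (Finset.univ.filter (fun j : Fin m => cs j x y)).card := by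
        apply Finset.card_equiv e
        intro s
        simp only [Finset.mem_filter, Finset.mem_univ, true_and, hcsdef,
          Equiv.symm_apply_apply]
      rw [← hbij]
      have hsig : Finset.univ.filter (fun s : (c : X → X → Prop) × Fin (k c) => s.1 x y)
          = (Finset.univ.filter (fun c => c x y)).sigma (fun c => Finset.univ) := by
        ext ⟨c, i⟩
        simp [Finset.mem_sigma]
      rw [hsig, Finset.card_sigma]
      simp only [Finset.card_univ, Fintype.card_fin]
    have hcount2 : ∑ c ∈ Finset.univ.filter (fun c => c x y), k c
        = ∑ c ∈ Finset.univ.filter (fun c => c ∈ D ∧ c x y), k c := by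
      symm
      apply Finset.sum_subset
      · intro c hc
        simp only [Finset.mem_filter] at hc ⊢
        exact ⟨Finset.mem_univ _, hc.2.2⟩
      · intro c hc hnc
        simp only [Finset.mem_filter] at hc hnc
        by_contra h
        exact hnc ⟨Finset.mem_univ _, hkD c h, hc.2⟩
    set F : Finset (X → X → Prop) := Finset.univ.filter (fun c => c ∈ D ∧ c x y) with hFdef
    have hA_le : (∑ c ∈ F, (k c : ℝ)) ≤ N * S x y := by
      calc ∑ c ∈ F, (k c : ℝ) ≤ ∑ c ∈ F, (N : ℝ) * w c :=
            Finset.sum_le_sum (fun c _ => hkle c)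
        _ = N * S x y := by rw [hSdef, Finset.mul_sum]
    have hA_gt : (N : ℝ) * S x y - K < ∑ c ∈ F, (k c : ℝ) := by
      have h1 : ∑ c ∈ F, ((N : ℝ) * w c - 1) ≤ ∑ c ∈ F, ((k c : ℝ)) := by
        apply Finset.sum_le_sum
        intro c _
        exact (hkgt c).le
      have h2 : ∑ c ∈ F, ((N : ℝ) * w c - 1) = N * S x y - F.card := by
        rw [Finset.sum_sub_distrib, ← Finset.mul_sum, hSdef]
        simp [hFdef]
      have h3 : (F.card : ℝ) ≤ K := by
        have := Finset.card_filter_le (Finset.univ : Finset (X → X → Prop))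
          (fun c => c ∈ D ∧ c x y)
        rw [Finset.card_univ] at this
        exact_mod_cast this
      -- need strict: one more step
      by_cases hFne : F.Nonempty
      · have h1' : ∑ c ∈ F, ((N : ℝ) * w c - 1) < ∑ c ∈ F, ((k c : ℝ)) :=
          Finset.sum_lt_sum_of_nonempty hFne (fun c _ => hkgt c)
        linarith
      · rw [Finset.not_nonempty_iff_eq_empty] at hFne
        rw [hFne]
        simp only [Finset.sum_empty]
        have hSF : S x y = ∑ c ∈ F, w c := rfl
        have : S x y = 0 := by rw [hSF, hFne, Finset.sum_empty]
        rw [this]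
        have : (0:ℝ) < K := by exact_mod_cast hKpos
        linarith
    have hcastA : (Set.ncard {j : Fin m | cs j x y} : ℝ) = ∑ c ∈ F, (k c : ℝ) := by
      rw [hcount, hcount2]
      push_cast
      rfl
    rw [hcastA]
    have hε' := hεle x y hxy
    have hN0 : (0:ℝ) ≤ N := Nat.cast_nonneg _
    constructor
    · intro hdxy
      have hs : 1 / 2 < S x y := (hmaj' x y hxy).1 hdxy
      have habs : ε ≤ S x y - 1 / 2 := by
        rwa [abs_of_pos (by linarith)] at hε'
      have hNs : (N : ℝ) * (1 / 2 + ε) ≤ N * S x y :=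
        mul_le_mul_of_nonneg_left (by linarith) hN0
      have : (N : ℝ) * (1 / 2 + ε) = N / 2 + N * ε := by ring
      linarith
    · intro hlt
      by_contra hnd
      have hs : S x y < 1 / 2 := hSlt x y hxy hnd
      have habs : ε ≤ 1 / 2 - S x y := by
        rw [abs_of_neg (by linarith)] at hε'
        linarith
      have hNs : (N : ℝ) * S x y ≤ N * (1 / 2 - ε) :=
        mul_le_mul_of_nonneg_left (by linarith) hN0
      have hK0 : (0:ℝ) < K := by exact_mod_cast hKpos
      have : (N : ℝ) * (1 / 2 - ε) = N / 2 - N * ε := by ring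
      linarith
  · rintro ⟨m, hm, cs, hcsD, hmaj⟩
    have hm' : (0 : ℝ) < m := by exact_mod_cast hm
    refine ⟨hd, fun c => ((Finset.univ.filter (fun j => cs j = c)).card : ℝ) / m,
      ?_, ?_, Set.toFinite _, ?_, ?_⟩
    · intro c
      refine ⟨by positivity, ?_⟩
      rw [div_le_one hm']
      have h1 : (Finset.univ.filter (fun j => cs j = c)).card ≤ m := by
        calc (Finset.univ.filter (fun j => cs j = c)).card
            ≤ (Finset.univ : Finset (Fin m)).card := Finset.card_filter_le _ _
          _ = m := by simp
      exact_mod_cast h1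
    · intro c hc
      have hne : (Finset.univ.filter (fun j => cs j = c)).card ≠ 0 := by
        intro h
        apply hc
        simp only [h, Nat.cast_zero, zero_div]
      obtain ⟨j, hj⟩ := Finset.card_pos.1 (Nat.pos_of_ne_zero hne)
      simp only [Finset.mem_filter] at hj
      rw [← hj.2]
      exact hcsD j
    · rw [finsum_eq_sum_of_fintype, ← Finset.sum_div]
      rw [div_eq_one_iff_eq (ne_of_gt hm')]
      rw [← Nat.cast_sum]
      congr 1
      symm
      calc (m : ℕ) = (Finset.univ : Finset (Fin m)).card := by simp
        _ = ∑ c : X → X → Prop, (Finset.univ.filter (fun j => cs j = c)).card :=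
            Finset.card_eq_sum_card_fiberwise (fun j _ => Finset.mem_univ (cs j))
    · intro x y hxy
      rw [finsum_mem_setOf_aux]
      have hkey : ∑ c ∈ Finset.univ.filter (fun c => c ∈ D ∧ c x y),
          ((Finset.univ.filter (fun j => cs j = c)).card : ℝ) / m
          = ((Finset.univ.filter (fun j : Fin m => cs j x y)).card : ℝ) / m := by
        rw [← Finset.sum_div]
        congr 1
        rw [← Nat.cast_sum]
        congr 1
        symm
        rw [Finset.card_eq_sum_card_fiberwise
          (f := cs) (s := Finset.univ.filter (fun j => cs j x y))
          (t := Finset.univ.filter (fun c => c ∈ D ∧ c x y))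
          (fun j hj => by
            simp only [Finset.mem_coe, Finset.mem_filter] at hj ⊢
            exact ⟨Finset.mem_univ _, hcsD j, hj.2⟩)]
        apply Finset.sum_congr rfl
        intro c hc
        simp only [Finset.mem_filter] at hc
        congr 1
        ext j
        simp only [Finset.mem_filter, Finset.filter_filter, Finset.mem_univ, true_and]
        constructor
        · rintro ⟨-, h⟩; exact h
        · intro h; exact ⟨h ▸ hc.2.2, h⟩
      rw [hkey, hmaj x y hxy]
      have hn : (Set.ncard {j : Fin m | cs j x y} : ℝ)
          = ((Finset.univ.filter (fun j : Fin m => cs j x y)).card : ℝ) := by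
        rw [Set.ncard_eq_toFinset_card', Set.toFinset_setOf]
      rw [hn, lt_div_iff₀ hm']
      constructor <;> intro h <;> linarith
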